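/- Let φ : 𝒪_n → 𝒪_n be a ℂ-algebra homomorphism with φ(𝔪) ⊆ 𝔪. Then there exist an open neighbourhood U' of 0 in ℂⁿ and a holomorphic map g : U' → ℂⁿ with g(0) = 0 such that for every germ f ∈ 𝒪_n, φ(f) is the germ at 0 of the composite F ∘ g, where F is any holomorphic representative of f on a neighbourhood of 0 (the composite germ being independent of the choices). Moreover g can be taken to be any holomorphic map whose component germs at 0 are φ(z_1), …, φ(z_n). -/

import Mathlib

open Filter Topology Set

noncomputable section

/-- `ℂⁿ`. -/
abbrev Cn (n : ℕ) : Type := EuclideanSpace ℂ (Fin n)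

namespace Filter.Germ

/-- The value at `x` of a germ at the neighbourhood filter of `x`. -/
def valueAt {α β : Type*} [TopologicalSpace α] {x : α} (g : Germ (𝓝 x) β) : β :=
  g.liftOn (fun f => f x) fun _ _ h => h.eq_of_nhds

@[simp] lemma valueAt_coe {α β : Type*} [TopologicalSpace α] {x : α} (f : α → β) :
    (↑f : Germ (𝓝 x) β).valueAt = f x := rfl

end Filter.Germ

/-- The `ℂ`-algebra structure on germs of `ℂ`-valued functions,
given by the constant functions. -/
instance germAlgebra {α : Type*} (l : Filter α) : Algebra ℂ (Germ l ℂ) :=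
  ((Filter.Germ.coeRingHom l).comp (Pi.constRingHom α ℂ)).toAlgebra

/-- `𝒪ₙ`: the ring of germs at the origin of `ℂⁿ` of holomorphic functions, realized as the
subalgebra of the ring of germs at `𝓝 0` of `ℂ`-valued functions consisting of germs having a
representative that is complex-analytic on a neighbourhood of `0`. -/
def HoloGerm (n : ℕ) : Subalgebra ℂ (Germ (𝓝 (0 : Cn n)) ℂ) where
  carrier := {g | ∃ F : Cn n → ℂ, AnalyticAt ℂ F 0 ∧ (↑F : Germ (𝓝 (0 : Cn n)) ℂ) = g}
  mul_mem' := by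
    rintro a b ⟨F, hF, rfl⟩ ⟨G, hG, rfl⟩
    exact ⟨F * G, hF.mul hG, by rw [← Filter.Germ.coe_mul]⟩
  add_mem' := by
    rintro a b ⟨F, hF, rfl⟩ ⟨G, hG, rfl⟩
    exact ⟨F + G, hF.add hG, by rw [← Filter.Germ.coe_add]⟩
  algebraMap_mem' := fun c => ⟨fun _ => c, analyticAt_const, rfl⟩

lemma valueAt_add {n : ℕ} (a b : Germ (𝓝 (0 : Cn n)) ℂ) :
    (a + b).valueAt = a.valueAt + b.valueAt := by
  induction a using Filter.Germ.inductionOn with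
  | h f => induction b using Filter.Germ.inductionOn with
    | h g => rfl

lemma valueAt_mul {n : ℕ} (a b : Germ (𝓝 (0 : Cn n)) ℂ) :
    (a * b).valueAt = a.valueAt * b.valueAt := by
  induction a using Filter.Germ.inductionOn with
  | h f => induction b using Filter.Germ.inductionOn with
    | h g => rfl

set_option synthInstance.maxHeartbeats 1000000 in
/-- The maximal ideal `𝔪 ⊆ 𝒪ₙ` of germs vanishing at the origin. -/
def mIdeal (n : ℕ) : Ideal (HoloGerm n) where
  carrier := {g | (g : Germ (𝓝 (0 : Cn n)) ℂ).valueAt = 0}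
  add_mem' := by
    intro a b ha hb
    show ((a + b : HoloGerm n) : Germ (𝓝 (0 : Cn n)) ℂ).valueAt = 0
    rw [Subalgebra.coe_add, valueAt_add, ha, hb, add_zero]
  zero_mem' := by
    show ((0 : HoloGerm n) : Germ (𝓝 (0 : Cn n)) ℂ).valueAt = 0
    rw [Subalgebra.coe_zero]
    rfl
  smul_mem' := by
    intro c x hx
    have hx' : ((x : Germ (𝓝 (0 : Cn n)) ℂ)).valueAt = 0 := hx
    show (((c * x : HoloGerm n) : Germ (𝓝 (0 : Cn n)) ℂ)).valueAt = 0
    rw [Subalgebra.coe_mul, valueAt_mul, hx', mul_zero]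

/-- The germ `zₐ ∈ 𝒪ₙ` of the `a`-th coordinate function. -/
def coordGerm (n : ℕ) (a : Fin n) : HoloGerm n :=
  ⟨(↑(fun z : Cn n => z a) : Germ (𝓝 (0 : Cn n)) ℂ),
    ⟨fun z : Cn n => z a, (EuclideanSpace.proj (𝕜 := ℂ) a).analyticAt 0, rfl⟩⟩


set_option synthInstance.maxHeartbeats 1000000
set_option maxHeartbeats 1000000

section Aux

open Asymptotics
open scoped ENNReal NNReal

variable {n : ℕ}

lemma sum_single_eq (z : Cn n) :
    ∑ a : Fin n, z a • (EuclideanSpace.single a 1 : Cn n) = z := by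
  ext i
  rw [WithLp.ofLp_sum, Finset.sum_apply]
  simp [EuclideanSpace.single_apply]

/-- Hadamard's lemma at the level of functions. -/
theorem hadamard {h : Cn n → ℂ} (hh : AnalyticAt ℂ h 0) :
    ∃ ha : Fin n → (Cn n → ℂ), (∀ a, AnalyticAt ℂ (ha a) 0) ∧
      ∀ᶠ z in 𝓝 (0 : Cn n), h z = h 0 + ∑ a, z a * ha a z := by
  obtain ⟨p, r, hp⟩ := hh
  obtain ⟨r', hr'0, hr'r⟩ := ENNReal.lt_iff_exists_nnreal_btwn.1 hp.r_pos
  have hr'rad : (r' : ℝ≥0∞) < p.radius := hr'r.trans_le hp.r_le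
  obtain ⟨C, hC0, hC⟩ := p.norm_mul_pow_le_of_lt_radius hr'rad
  have hr'pos : (0:ℝ) < (r' : ℝ) := by exact_mod_cast hr'0
  set e : Fin n → Cn n := fun a => EuclideanSpace.single a 1 with he
  set q : Fin n → FormalMultilinearSeries ℂ (Cn n) ℂ :=
    fun a k => (p (k+1)).curryLeft (e a) with hq
  have hqnorm : ∀ a k, ‖q a k‖ ≤ ‖p (k+1)‖ := by
    intro a k
    calc ‖q a k‖ ≤ ‖(p (k+1)).curryLeft‖ * ‖e a‖ := ContinuousLinearMap.le_opNorm _ _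
    _ = ‖p (k+1)‖ := by
        rw [ContinuousMultilinearMap.curryLeft_norm, he, EuclideanSpace.norm_single, norm_one,
          mul_one]
  have hqrad : ∀ a, (r' : ℝ≥0∞) ≤ (q a).radius := by
    intro a
    apply (q a).le_radius_of_bound (C / (r' : ℝ))
    intro k
    rw [le_div_iff₀ hr'pos]
    calc ‖q a k‖ * (r':ℝ) ^ k * r' ≤ ‖p (k+1)‖ * (r':ℝ) ^ k * r' := by
          have := hqnorm a k
          have h2 : (0:ℝ) ≤ (r':ℝ)^k * r' := by positivity
          nlinarith [pow_pos hr'pos k]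
    _ = ‖p (k+1)‖ * (r':ℝ) ^ (k+1) := by ring
    _ ≤ C := hC (k+1)
  have hqpos : ∀ a, 0 < (q a).radius := fun a => lt_of_lt_of_le hr'0 (hqrad a)
  refine ⟨fun a => (q a).sum,
    fun a => ((q a).hasFPowerSeriesOnBall (hqpos a)).hasFPowerSeriesAt.analyticAt, ?_⟩
  have hball : EMetric.ball (0 : Cn n) (min r (r' : ℝ≥0∞)) ∈ 𝓝 (0 : Cn n) :=
    EMetric.ball_mem_nhds _ (lt_min hp.r_pos hr'0)
  filter_upwards [hball] with z hz
  replace hz : edist z 0 < r ∧ edist z 0 < (r' : ℝ≥0∞) := lt_min_iff.1 hz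
  have hz1 : z ∈ EMetric.ball (0 : Cn n) r := by
    exact hz.1
  have hsum_h : HasSum (fun m => p m fun _ => z) (h z) := by
    have := hp.hasSum hz1
    simpa using this
  have hsum_a : ∀ a, HasSum (fun k => z a * (q a k fun _ => z)) (z a * (q a).sum z) := by
    intro a
    refine HasSum.mul_left _ ?_
    apply (q a).hasSum
    exact lt_of_lt_of_le (by simpa [edist_zero_right] using hz.2) (hqrad a)
  have hsum_tot : HasSum (fun k => ∑ a, z a * (q a k fun _ => z))
      (∑ a, z a * (q a).sum z) := hasSum_sum (fun a _ => hsum_a a)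
  have hterm : ∀ k, (∑ a, z a * (q a k fun _ => z)) = p (k+1) (fun _ => z) := by
    intro k
    have hcons : Fin.cons z (fun _ : Fin k => z) = fun _ : Fin (k+1) => z := by
      funext i
      refine Fin.cases ?_ ?_ i <;> simp
    calc ∑ a, z a * (q a k fun _ => z)
        = ∑ a, ((z a • (p (k+1)).curryLeft (e a)) fun _ => z) := by
          simp [hq, smul_eq_mul]
      _ = (((p (k+1)).curryLeft (∑ a, z a • e a)) fun _ => z) := by
          rw [map_sum]
          · rw [ContinuousMultilinearMap.sum_apply]
            exact Finset.sum_congr rfl fun a _ => by rw [map_smul]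
      _ = p (k+1) (fun _ => z) := by
          rw [sum_single_eq, ContinuousMultilinearMap.curryLeft_apply, hcons]
  rw [show (fun k => ∑ a, z a * (q a k fun _ => z)) = fun k => p (k+1) (fun _ => z) from
    funext hterm] at hsum_tot
  have hshift : HasSum (fun k => p (k+1) (fun _ => z)) (h z - p 0 (fun _ => z)) := by
    have := (hasSum_nat_add_iff' 1).2 hsum_h
    simpa using this
  have := hsum_tot.unique hshift
  rw [hp.coeff_zero] at this
  linear_combination -this

/-- An analytic germ which is `O(‖z‖^k)` for every `k` vanishes near `0`. -/
theorem vanish {Δ : Cn n → ℂ} (hΔ : AnalyticAt ℂ Δ 0)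
    (hO : ∀ k : ℕ, Δ =O[𝓝 (0 : Cn n)] fun z => ‖z‖ ^ k) :
    ∀ᶠ z in 𝓝 (0 : Cn n), Δ z = 0 := by
  obtain ⟨p, hp⟩ := hΔ
  have key : ∀ m : ℕ, ∀ y : Cn n, (p m fun _ => y) = 0 := by
    intro m
    induction m using Nat.strong_induction_on with
    | _ m ih =>
      intro y
      have hps : ∀ w : Cn n, p.partialSum (m+1) w = p m fun _ => w := by
        intro w
        rw [FormalMultilinearSeries.partialSum]
        rw [Finset.sum_range_succ]
        have : ∀ j ∈ Finset.range m, (p j fun _ => w) = 0 := fun j hj =>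
          ih j (Finset.mem_range.1 hj) w
        rw [Finset.sum_congr rfl this, Finset.sum_const, smul_zero, zero_add]
      have h1 : (fun w : Cn n => Δ w - p.partialSum (m+1) w) =O[𝓝 0]
          fun w => ‖w‖ ^ (m+1) := by
        have := hp.isBigO_sub_partialSum_pow (m+1)
        simpa using this
      have h2 : (fun w : Cn n => (p m fun _ => w)) =O[𝓝 0] fun w => ‖w‖ ^ (m+1) := by
        have := ((hO (m+1)).sub h1)
        refine this.congr' ?_ (EventuallyEq.rfl)
        filter_upwards with w
        rw [hps w]; ring
      obtain ⟨c, hc⟩ := h2.isBigOWith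
      rw [isBigOWith_iff] at hc
      obtain ⟨ε, hε0, hball⟩ := Metric.eventually_nhds_iff.1 hc
      by_cases hy0 : y = 0
      · subst hy0
        have h0 := hball (show dist (0 : Cn n) 0 < ε by simpa using hε0)
        simpa using norm_le_zero_iff.1 (by simpa using h0)
      · have hyn : 0 < ‖y‖ := norm_pos_iff.2 hy0
        set c₀ := (p m fun _ => y) with hc₀
        have hbnd : ∀ᶠ t : ℝ in 𝓝[>] (0:ℝ), ‖c₀‖ ≤ (c * ‖y‖ ^ (m+1)) * t := by
          have hmem : ∀ᶠ t : ℝ in 𝓝[>] (0:ℝ), t ∈ Ioo (0:ℝ) (min 1 (ε / ‖y‖)) := by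
            apply Ioo_mem_nhdsGT_of_mem
            exact ⟨le_refl _, lt_min one_pos (div_pos hε0 hyn)⟩
          filter_upwards [hmem] with t ht
          obtain ⟨ht0, ht1⟩ := ht
          have htε : t * ‖y‖ < ε := by
            rw [← lt_div_iff₀ hyn]
            exact ht1.trans_le (min_le_right _ _)
          have hmem2 : dist ((t : ℂ) • y) (0 : Cn n) < ε := by
            rw [dist_zero_right, norm_smul]
            simpa [abs_of_pos ht0] using htε
          have hb := hball hmem2
          rw [ContinuousMultilinearMap.map_smul_univ] at hb
          simp only [smul_eq_mul, Finset.prod_const, Finset.card_univ, Fintype.card_fin,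
            norm_mul, norm_pow, norm_smul, Complex.norm_real, Real.norm_eq_abs,
            abs_of_pos ht0, abs_norm, ← hc₀] at hb
          have hb' : t ^ m * ‖c₀‖ ≤ c * (t ^ (m+1) * ‖y‖ ^ (m+1)) := by
            calc t ^ m * ‖c₀‖ ≤ c * (t * ‖y‖) ^ (m+1) := hb
            _ = c * (t ^ (m+1) * ‖y‖ ^ (m+1)) := by ring
          have htm : 0 < t ^ m := pow_pos ht0 m
          rw [show (m+1) = m + 1 from rfl, pow_succ] at hb'
          have := (mul_le_mul_iff_right₀ htm).1
            (by calc t ^ m * ‖c₀‖ ≤ c * (t ^ m * t * ‖y‖ ^ (m+1)) := hb'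
                _ = t ^ m * ((c * ‖y‖ ^ (m+1)) * t) := by ring)
          exact this
        have htend : Tendsto (fun t : ℝ => (c * ‖y‖ ^ (m+1)) * t) (𝓝[>] (0:ℝ))
            (𝓝 0) := by
          have : Tendsto (fun t : ℝ => (c * ‖y‖ ^ (m+1)) * t) (𝓝 (0:ℝ))
              (𝓝 ((c * ‖y‖ ^ (m+1)) * 0)) := (tendsto_id.const_mul _)
          simpa using this.mono_left nhdsWithin_le_nhds
        have hle : ‖c₀‖ ≤ 0 := ge_of_tendsto htend hbnd
        exact norm_le_zero_iff.1 hle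
  obtain ⟨r, hpr⟩ := hp
  have hb : EMetric.ball (0 : Cn n) r ∈ 𝓝 (0 : Cn n) := EMetric.ball_mem_nhds _ hpr.r_pos
  filter_upwards [hb] with z hz
  have := hpr.hasSum hz
  simp only [key] at this
  have h0 := this.unique (hasSum_zero)
  simpa using h0

/-- The ideal of `𝒪ₙ` generated by the coordinate germs. -/
def coordIdeal (n : ℕ) : Ideal (HoloGerm n) := Ideal.span (Set.range (coordGerm n))

lemma coordGerm_coe (a : Fin n) :
    ((coordGerm n a : HoloGerm n) : Germ (𝓝 (0 : Cn n)) ℂ) = ↑(fun z : Cn n => z a) := rfl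

lemma algebraMap_holo_coe (c : ℂ) :
    ((algebraMap ℂ (HoloGerm n) c : HoloGerm n) : Germ (𝓝 (0 : Cn n)) ℂ)
      = ↑(fun _ : Cn n => c) := rfl

lemma coordGerm_mem_mIdeal (a : Fin n) : coordGerm n a ∈ mIdeal n := by
  show ((coordGerm n a : HoloGerm n) : Germ (𝓝 (0 : Cn n)) ℂ).valueAt = 0
  rw [coordGerm_coe, Filter.Germ.valueAt_coe]
  rfl

/-- Hadamard's lemma at the level of germs. -/
lemma germ_hadamard (γ : HoloGerm n) :
    γ - algebraMap ℂ (HoloGerm n) ((γ : Germ (𝓝 (0 : Cn n)) ℂ).valueAt) ∈ coordIdeal n := by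
  obtain ⟨F, hF, hFγ⟩ := γ.2
  obtain ⟨ha, hana, heq⟩ := hadamard hF
  set hg : Fin n → HoloGerm n := fun a => ⟨(↑(ha a)), ⟨ha a, hana a, rfl⟩⟩ with hhg
  have hval : (γ : Germ (𝓝 (0 : Cn n)) ℂ).valueAt = F 0 := by
    rw [← hFγ, Filter.Germ.valueAt_coe]
  have hsum : ∑ a : Fin n, ((↑(fun z : Cn n => z a * ha a z) : Germ (𝓝 (0 : Cn n)) ℂ))
      = ↑(fun z : Cn n => ∑ a : Fin n, z a * ha a z) := by
    have h := map_sum (Filter.Germ.coeRingHom (𝓝 (0 : Cn n)))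
      (fun a : Fin n => fun z : Cn n => z a * ha a z) Finset.univ
    have h2 : (∑ a : Fin n, fun z : Cn n => z a * ha a z)
        = (fun z : Cn n => ∑ a : Fin n, z a * ha a z) := by
      funext z
      rw [Finset.sum_apply]
    rw [h2] at h
    exact h.symm
  have key : γ - algebraMap ℂ (HoloGerm n) ((γ : Germ (𝓝 (0 : Cn n)) ℂ).valueAt)
      = ∑ a, coordGerm n a * hg a := by
    apply Subtype.ext
    push_cast
    show (γ : Germ (𝓝 (0 : Cn n)) ℂ) - ((algebraMap ℂ (HoloGerm n) _ : HoloGerm n) : Germ _ ℂ)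
      = ∑ a, ((coordGerm n a * hg a : HoloGerm n) : Germ (𝓝 (0 : Cn n)) ℂ)
    rw [hval, ← hFγ, algebraMap_holo_coe]
    have hterm : ∀ a : Fin n, ((coordGerm n a * hg a : HoloGerm n) : Germ (𝓝 (0 : Cn n)) ℂ)
        = ↑(fun z : Cn n => z a * ha a z) := by
      intro a
      rw [MulMemClass.coe_mul, coordGerm_coe]
      show (↑(fun z : Cn n => z a) * ↑(ha a) : Germ (𝓝 (0 : Cn n)) ℂ) = _
      rw [← Filter.Germ.coe_mul]
      rfl
    rw [Finset.sum_congr rfl (fun a _ => hterm a), hsum, ← Filter.Germ.coe_sub]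
    rw [Filter.Germ.coe_eq]
    filter_upwards [heq] with z hz
    show F z - F 0 = ∑ a : Fin n, z a * ha a z
    rw [hz]; ring
  rw [key]
  exact Ideal.sum_mem _ fun a _ =>
    Ideal.mul_mem_right _ _ (Ideal.subset_span ⟨a, rfl⟩)

/-- Every element of the coordinate ideal is a linear polynomial plus an element of `I²`. -/
lemma claim1 : ∀ m ∈ coordIdeal n, ∃ L, L ∈ Algebra.adjoin ℂ (Set.range (coordGerm n)) ∧
    L ∈ coordIdeal n ∧ m - L ∈ coordIdeal n ^ 2 := by
  intro m hm
  induction hm using Submodule.span_induction with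
  | mem x hx =>
    exact ⟨x, Algebra.subset_adjoin hx, Ideal.subset_span hx, by
      simpa using Submodule.zero_mem (coordIdeal n ^ 2)⟩
  | zero =>
    exact ⟨0, Subalgebra.zero_mem _, Ideal.zero_mem _, by
      simpa using Submodule.zero_mem (coordIdeal n ^ 2)⟩
  | add x y hx hy ihx ihy =>
    obtain ⟨L1, h1A, h1I, h1⟩ := ihx
    obtain ⟨L2, h2A, h2I, h2⟩ := ihy
    refine ⟨L1 + L2, Subalgebra.add_mem _ h1A h2A, Ideal.add_mem _ h1I h2I, ?_⟩
    have := Submodule.add_mem _ h1 h2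
    convert this using 1
    ring
  | smul r x hx ih =>
    obtain ⟨L, hLA, hLI, hd⟩ := ih
    refine ⟨algebraMap ℂ _ ((r : Germ (𝓝 (0 : Cn n)) ℂ).valueAt) * L,
      Subalgebra.mul_mem _ (Subalgebra.algebraMap_mem _ _) hLA,
      Ideal.mul_mem_left _ _ hLI, ?_⟩
    have h1 : (r - algebraMap ℂ _ ((r : Germ (𝓝 (0 : Cn n)) ℂ).valueAt)) * L
        ∈ coordIdeal n ^ 2 := by
      rw [sq]; exact Ideal.mul_mem_mul (germ_hadamard r) hLI
    have h2 : r * (x - L) ∈ coordIdeal n ^ 2 := Ideal.mul_mem_left _ _ hd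
    have := Submodule.add_mem _ h1 h2
    convert this using 1
    rw [smul_eq_mul]
    ring

/-- Elements of `I^k` are polynomials (in `I^k`) plus elements of `I^(k+1)`. -/
lemma claimk : ∀ (k : ℕ), ∀ d ∈ coordIdeal n ^ k,
    ∃ Q, Q ∈ Algebra.adjoin ℂ (Set.range (coordGerm n)) ∧ Q ∈ coordIdeal n ^ k ∧
      d - Q ∈ coordIdeal n ^ (k+1) := by
  intro k
  induction k with
  | zero =>
    intro d _
    refine ⟨algebraMap ℂ _ ((d : Germ (𝓝 (0 : Cn n)) ℂ).valueAt),
      Subalgebra.algebraMap_mem _ _, ?_, ?_⟩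
    · rw [pow_zero, Ideal.one_eq_top]; trivial
    · rw [pow_one]; exact germ_hadamard d
  | succ k ih =>
    intro d hd
    rw [pow_succ] at hd
    refine Submodule.mul_induction_on hd (fun y hy m hm => ?_) (fun x y hx hy => ?_)
    · obtain ⟨Q, hQA, hQk, hQd⟩ := ih y hy
      obtain ⟨L, hLA, hLI, hLd⟩ := claim1 m hm
      refine ⟨Q * L, Subalgebra.mul_mem _ hQA hLA, ?_, ?_⟩
      · rw [pow_succ]; exact Ideal.mul_mem_mul hQk hLI
      · have h1 : Q * (m - L) ∈ coordIdeal n ^ (k+2) := by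
          rw [show k + 2 = k + 2 from rfl, pow_add]
          exact Ideal.mul_mem_mul hQk hLd
        have h2 : (y - Q) * m ∈ coordIdeal n ^ (k+2) := by
          rw [show k + 2 = (k+1) + 1 from rfl, pow_succ]
          exact Ideal.mul_mem_mul hQd hm
        have := Submodule.add_mem _ h1 h2
        convert this using 1
        ring
    · obtain ⟨Q1, h1A, h1k, h1⟩ := hx
      obtain ⟨Q2, h2A, h2k, h2⟩ := hy
      refine ⟨Q1 + Q2, Subalgebra.add_mem _ h1A h2A, Ideal.add_mem _ h1k h2k, ?_⟩
      have := Submodule.add_mem _ h1 h2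
      convert this using 1
      ring

/-- Every germ is a polynomial in the coordinates modulo `I^k`. -/
lemma approx : ∀ (k : ℕ) (f : HoloGerm n),
    ∃ P, P ∈ Algebra.adjoin ℂ (Set.range (coordGerm n)) ∧ f - P ∈ coordIdeal n ^ k := by
  intro k
  induction k with
  | zero =>
    intro f
    refine ⟨0, Subalgebra.zero_mem _, ?_⟩
    rw [pow_zero, Ideal.one_eq_top]; trivial
  | succ k ih =>
    intro f
    obtain ⟨P, hPA, hfP⟩ := ih f
    obtain ⟨Q, hQA, _, hQd⟩ := claimk k _ hfP
    refine ⟨P + Q, Subalgebra.add_mem _ hPA hQA, ?_⟩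
    rwa [← sub_sub]

/-- Germs with a representative which is `O(‖z‖^k)` at `0`. -/
def Bset (n k : ℕ) : Set (Germ (𝓝 (0 : Cn n)) ℂ) :=
  {d | ∃ Δ : Cn n → ℂ, (↑Δ : Germ (𝓝 (0 : Cn n)) ℂ) = d ∧
    Δ =O[𝓝 (0 : Cn n)] fun z => ‖z‖ ^ k}

lemma Bset_zero (k : ℕ) : (0 : Germ (𝓝 (0 : Cn n)) ℂ) ∈ Bset n k :=
  ⟨0, rfl, isBigO_zero _ _⟩

lemma Bset_add {k : ℕ} {d₁ d₂ : Germ (𝓝 (0 : Cn n)) ℂ} (h₁ : d₁ ∈ Bset n k)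
    (h₂ : d₂ ∈ Bset n k) : d₁ + d₂ ∈ Bset n k := by
  obtain ⟨Δ₁, e₁, O₁⟩ := h₁
  obtain ⟨Δ₂, e₂, O₂⟩ := h₂
  exact ⟨Δ₁ + Δ₂, by rw [← e₁, ← e₂, Filter.Germ.coe_add], O₁.add O₂⟩

lemma Bset_sub {k : ℕ} {d₁ d₂ : Germ (𝓝 (0 : Cn n)) ℂ} (h₁ : d₁ ∈ Bset n k)
    (h₂ : d₂ ∈ Bset n k) : d₁ - d₂ ∈ Bset n k := by
  obtain ⟨Δ₁, e₁, O₁⟩ := h₁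
  obtain ⟨Δ₂, e₂, O₂⟩ := h₂
  exact ⟨Δ₁ - Δ₂, by rw [← e₁, ← e₂, Filter.Germ.coe_sub], O₁.sub O₂⟩

lemma Bset_mul {j k : ℕ} {d₁ d₂ : Germ (𝓝 (0 : Cn n)) ℂ} (h₁ : d₁ ∈ Bset n j)
    (h₂ : d₂ ∈ Bset n k) : d₁ * d₂ ∈ Bset n (j + k) := by
  obtain ⟨Δ₁, e₁, O₁⟩ := h₁
  obtain ⟨Δ₂, e₂, O₂⟩ := h₂
  refine ⟨Δ₁ * Δ₂, by rw [← e₁, ← e₂, Filter.Germ.coe_mul], ?_⟩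
  rw [show (fun z : Cn n => ‖z‖ ^ (j + k)) = fun z => ‖z‖ ^ j * ‖z‖ ^ k from
    funext fun z => pow_add _ _ _]
  exact O₁.mul O₂

/-- A ring homomorphism sending germs to bounded germs and coordinate germs to `O(‖z‖)` germs
sends `I^k` into `O(‖z‖^k)` germs. -/
lemma hom_mem_Bset (Θ : HoloGerm n →+* Germ (𝓝 (0 : Cn n)) ℂ)
    (h0 : ∀ γ, Θ γ ∈ Bset n 0) (h1 : ∀ a, Θ (coordGerm n a) ∈ Bset n 1) :
    ∀ k, ∀ m ∈ coordIdeal n ^ k, Θ m ∈ Bset n k := by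
  have hI : ∀ m ∈ coordIdeal n, Θ m ∈ Bset n 1 := by
    intro m hm
    induction hm using Submodule.span_induction with
    | mem x hx => obtain ⟨a, rfl⟩ := hx; exact h1 a
    | zero => rw [map_zero]; exact Bset_zero 1
    | add x y hx hy ihx ihy => rw [map_add]; exact Bset_add ihx ihy
    | smul r x hx ih =>
      rw [smul_eq_mul, map_mul]
      have := Bset_mul (h0 r) ih
      simpa using this
  intro k
  induction k with
  | zero => intro m _; exact h0 m
  | succ k ih =>
    intro m hm
    rw [pow_succ] at hm
    refine Submodule.mul_induction_on hm (fun y hy x hx => ?_) (fun x y hx hy => ?_)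
    · rw [map_mul]; exact Bset_mul (ih y hy) (hI x hx)
    · rw [map_add]; exact Bset_add hx hy

lemma holo_mem_B0 {d : Germ (𝓝 (0 : Cn n)) ℂ}
    (hd : ∃ G : Cn n → ℂ, AnalyticAt ℂ G 0 ∧ (↑G : Germ (𝓝 (0 : Cn n)) ℂ) = d) :
    d ∈ Bset n 0 := by
  obtain ⟨G, hG, rfl⟩ := hd
  refine ⟨G, rfl, ?_⟩
  rw [show (fun z : Cn n => ‖z‖ ^ (0:ℕ)) = (1 : Cn n → ℝ) from funext fun z => by simp]
  exact hG.continuousAt.isBigO_one ℝ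

lemma m_mem_B1 {d : Germ (𝓝 (0 : Cn n)) ℂ}
    (hd : ∃ G : Cn n → ℂ, AnalyticAt ℂ G 0 ∧ (↑G : Germ (𝓝 (0 : Cn n)) ℂ) = d)
    (h0 : d.valueAt = 0) : d ∈ Bset n 1 := by
  obtain ⟨G, hG, rfl⟩ := hd
  have hG0 : G 0 = 0 := h0
  refine ⟨G, rfl, ?_⟩
  have h1 := hG.differentiableAt.hasFDerivAt.isBigO_sub
  have h2 : G =O[𝓝 (0 : Cn n)] fun z : Cn n => z - 0 := by
    refine h1.congr' ?_ EventuallyEq.rfl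
    filter_upwards with z
    rw [hG0, sub_zero]
  have h3 := h2.norm_right
  refine h3.congr' EventuallyEq.rfl ?_
  filter_upwards with z
  rw [sub_zero, pow_one]

/-- Composition with `g` as an algebra homomorphism on germs. -/
def compAlgHom (g : Cn n → Cn n) (hg : Tendsto g (𝓝 (0 : Cn n)) (𝓝 (0 : Cn n))) :
    Germ (𝓝 (0 : Cn n)) ℂ →ₐ[ℂ] Germ (𝓝 (0 : Cn n)) ℂ where
  toFun d := d.compTendsto g hg
  map_one' := by
    show ((1 : Cn n → ℂ) : Germ (𝓝 (0 : Cn n)) ℂ).compTendsto g hg = 1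
    rw [Filter.Germ.coe_compTendsto]
    rfl
  map_mul' a b := by
    induction a using Filter.Germ.inductionOn with
    | h fa =>
      induction b using Filter.Germ.inductionOn with
      | h fb =>
        show ((↑fa * ↑fb : Germ (𝓝 (0 : Cn n)) ℂ)).compTendsto g hg
          = ((↑fa : Germ (𝓝 (0 : Cn n)) ℂ).compTendsto g hg)
            * ((↑fb : Germ (𝓝 (0 : Cn n)) ℂ).compTendsto g hg)
        rw [← Filter.Germ.coe_mul, Filter.Germ.coe_compTendsto, Filter.Germ.coe_compTendsto,
          Filter.Germ.coe_compTendsto, ← Filter.Germ.coe_mul]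
        rfl
  map_zero' := by
    show ((0 : Cn n → ℂ) : Germ (𝓝 (0 : Cn n)) ℂ).compTendsto g hg = 0
    rw [Filter.Germ.coe_compTendsto]
    rfl
  map_add' a b := by
    induction a using Filter.Germ.inductionOn with
    | h fa =>
      induction b using Filter.Germ.inductionOn with
      | h fb =>
        show ((↑fa + ↑fb : Germ (𝓝 (0 : Cn n)) ℂ)).compTendsto g hg
          = ((↑fa : Germ (𝓝 (0 : Cn n)) ℂ).compTendsto g hg)
            + ((↑fb : Germ (𝓝 (0 : Cn n)) ℂ).compTendsto g hg)
        rw [← Filter.Germ.coe_add, Filter.Germ.coe_compTendsto, Filter.Germ.coe_compTendsto,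
          Filter.Germ.coe_compTendsto, ← Filter.Germ.coe_add]
        rfl
  commutes' c := by
    show ((fun _ : Cn n => c : Cn n → ℂ) : Germ (𝓝 (0 : Cn n)) ℂ).compTendsto g hg = _
    rw [Filter.Germ.coe_compTendsto]
    rfl

/-- The main uniqueness statement. -/
lemma main2 (φ : HoloGerm n →ₐ[ℂ] HoloGerm n)
    (hφ : ∀ g ∈ mIdeal n, φ g ∈ mIdeal n)
    (U'' : Set (Cn n)) (g' : Cn n → Cn n) (hU : IsOpen U'') (h0U : (0 : Cn n) ∈ U'')
    (hg'A : AnalyticOnNhd ℂ g' U'') (hg'0 : g' 0 = 0)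
    (hcomp : ∀ a : Fin n,
      (↑(fun x : Cn n => g' x a) : Germ (𝓝 (0 : Cn n)) ℂ) = ↑(φ (coordGerm n a)))
    (f : HoloGerm n) (F : Cn n → ℂ) (hF : AnalyticAt ℂ F 0)
    (hFf : (↑F : Germ (𝓝 (0 : Cn n)) ℂ) = ↑f) :
    (↑(φ f) : Germ (𝓝 (0 : Cn n)) ℂ) = ↑(F ∘ g') := by
  have hg'at : AnalyticAt ℂ g' 0 := hg'A 0 h0U
  have htend : Tendsto g' (𝓝 (0 : Cn n)) (𝓝 (0 : Cn n)) := by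
    have := hg'at.continuousAt
    rwa [ContinuousAt, hg'0] at this
  set Ψ := compAlgHom g' htend with hΨ
  set φ' : HoloGerm n →ₐ[ℂ] Germ (𝓝 (0 : Cn n)) ℂ := ((HoloGerm n).val).comp φ with hφ'
  set ψ' : HoloGerm n →ₐ[ℂ] Germ (𝓝 (0 : Cn n)) ℂ := Ψ.comp ((HoloGerm n).val) with hψ'
  have hφ'app : ∀ γ : HoloGerm n, φ' γ = ((φ γ : HoloGerm n) : Germ (𝓝 (0 : Cn n)) ℂ) :=
    fun γ => rfl
  have hψ'app : ∀ (G : Cn n → ℂ) (γ : HoloGerm n),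
      (↑G : Germ (𝓝 (0 : Cn n)) ℂ) = ↑γ → ψ' γ = ↑(G ∘ g') := by
    intro G γ hGγ
    show Ψ ((γ : HoloGerm n) : Germ (𝓝 (0 : Cn n)) ℂ) = ↑(G ∘ g')
    rw [← hGγ]
    exact Filter.Germ.coe_compTendsto G htend
  have hadj : Set.EqOn φ' ψ' (Algebra.adjoin ℂ (Set.range (coordGerm n))) := by
    rw [AlgHom.eqOn_adjoin_iff]
    rintro x ⟨a, rfl⟩
    have h1 : ψ' (coordGerm n a) = ↑((fun z : Cn n => z a) ∘ g') :=
      hψ'app (fun z : Cn n => z a) (coordGerm n a) rfl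
    rw [hφ'app, h1, ← hcomp a]
    rfl
  have h1φ : ∀ a, φ' (coordGerm n a) ∈ Bset n 1 := by
    intro a
    rw [hφ'app]
    exact m_mem_B1 (φ (coordGerm n a)).2 (hφ _ (coordGerm_mem_mIdeal a))
  have hΘφ : ∀ k, ∀ m ∈ coordIdeal n ^ k, φ' m ∈ Bset n k := by
    refine hom_mem_Bset φ'.toRingHom (fun γ => ?_) h1φ
    rw [show φ'.toRingHom γ = φ' γ from rfl, hφ'app]
    exact holo_mem_B0 (φ γ).2
  have hΘψ : ∀ k, ∀ m ∈ coordIdeal n ^ k, ψ' m ∈ Bset n k := by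
    refine hom_mem_Bset ψ'.toRingHom (fun γ => ?_) (fun a => ?_)
    · obtain ⟨G, hG, hGγ⟩ := γ.2
      rw [show ψ'.toRingHom γ = ψ' γ from rfl, hψ'app G γ hGγ]
      refine ⟨G ∘ g', rfl, ?_⟩
      rw [show (fun z : Cn n => ‖z‖ ^ (0:ℕ)) = (1 : Cn n → ℝ) from funext fun z => by simp]
      have hGc : ContinuousAt G (g' 0) := by
        rw [hg'0]; exact hG.continuousAt
      exact (hGc.comp hg'at.continuousAt).isBigO_one ℝ
    · rw [show ψ'.toRingHom (coordGerm n a) = ψ' (coordGerm n a) from rfl,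
        ← hadj (Algebra.subset_adjoin ⟨a, rfl⟩)]
      exact h1φ a
  have key : ∀ k, ((↑(φ f) : Germ (𝓝 (0 : Cn n)) ℂ) - ↑(F ∘ g')) ∈ Bset n k := by
    intro k
    obtain ⟨P, hPA, hfP⟩ := approx k f
    have h2 : φ' P = ψ' P := hadj hPA
    have h3 : ψ' f = ↑(F ∘ g') := hψ'app F f hFf
    have e1 : (↑(φ f) : Germ (𝓝 (0 : Cn n)) ℂ) - ↑(F ∘ g') = φ' (f - P) - ψ' (f - P) := by
      rw [map_sub, map_sub, ← hφ'app f, h2, h3]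
      ring
    rw [e1]
    exact Bset_sub (hΘφ k _ hfP) (hΘψ k _ hfP)
  obtain ⟨G1, hG1, hG1e⟩ := (φ f).2
  have hFg' : AnalyticAt ℂ (F ∘ g') 0 := by
    refine AnalyticAt.comp ?_ hg'at
    rwa [hg'0]
  set Δ : Cn n → ℂ := fun z => G1 z - F (g' z) with hΔdef
  have hΔ : AnalyticAt ℂ Δ 0 := hG1.sub hFg'
  have hΔgerm : (↑Δ : Germ (𝓝 (0 : Cn n)) ℂ) = ↑(φ f) - ↑(F ∘ g') := by
    rw [← hG1e, ← Filter.Germ.coe_sub]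
    rfl
  have hO : ∀ k : ℕ, Δ =O[𝓝 (0 : Cn n)] fun z => ‖z‖ ^ k := by
    intro k
    obtain ⟨Δk, hΔk, hOk⟩ := key k
    have heq : Δ =ᶠ[𝓝 (0 : Cn n)] Δk := by
      rw [← Filter.Germ.coe_eq, hΔgerm, hΔk]
    exact heq.trans_isBigO hOk
  have hzero := vanish hΔ hO
  have : (↑Δ : Germ (𝓝 (0 : Cn n)) ℂ) = 0 := by
    rw [show (0 : Germ (𝓝 (0 : Cn n)) ℂ) = ((0 : Cn n → ℂ) : Germ (𝓝 (0 : Cn n)) ℂ) from rfl,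
      Filter.Germ.coe_eq]
    filter_upwards [hzero] with z hz using hz
  rw [hΔgerm] at this
  exact sub_eq_zero.1 this

end Aux

/-- Let `φ : 𝒪ₙ → 𝒪ₙ` be a `ℂ`-algebra homomorphism with `φ(𝔪) ⊆ 𝔪`.  Then there are an open
neighbourhood `U'` of `0` in `ℂⁿ` and a holomorphic map `g : U' → ℂⁿ` with `g 0 = 0`, whose
component germs at `0` are `φ(z₁), …, φ(zₙ)`, such that for every germ `f ∈ 𝒪ₙ` and every
holomorphic representative `F` of `f` near `0`, `φ(f)` is the germ at `0` of `F ∘ g`.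
Moreover `g` can be taken to be any holomorphic map whose component germs at `0` are the
`φ(zₐ)`. -/
theorem algHom_is_composition (n : ℕ) (hn : 1 ≤ n)
    (φ : HoloGerm n →ₐ[ℂ] HoloGerm n)
    (hφ : ∀ g ∈ mIdeal n, φ g ∈ mIdeal n) :
    (∃ (U' : Set (Cn n)) (g : Cn n → Cn n), IsOpen U' ∧ (0 : Cn n) ∈ U' ∧
      AnalyticOnNhd ℂ g U' ∧ g 0 = 0 ∧
      (∀ a : Fin n,
        (↑(fun x : Cn n => g x a) : Germ (𝓝 (0 : Cn n)) ℂ) = ↑(φ (coordGerm n a))) ∧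
      (∀ f : HoloGerm n, ∀ F : Cn n → ℂ, AnalyticAt ℂ F 0 →
        (↑F : Germ (𝓝 (0 : Cn n)) ℂ) = ↑f →
        (↑(φ f) : Germ (𝓝 (0 : Cn n)) ℂ) = ↑(F ∘ g))) ∧
    (∀ (U'' : Set (Cn n)) (g' : Cn n → Cn n), IsOpen U'' → (0 : Cn n) ∈ U'' →
      AnalyticOnNhd ℂ g' U'' → g' 0 = 0 →
      (∀ a : Fin n,
        (↑(fun x : Cn n => g' x a) : Germ (𝓝 (0 : Cn n)) ℂ) = ↑(φ (coordGerm n a))) →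
      ∀ f : HoloGerm n, ∀ F : Cn n → ℂ, AnalyticAt ℂ F 0 →
        (↑F : Germ (𝓝 (0 : Cn n)) ℂ) = ↑f →
        (↑(φ f) : Germ (𝓝 (0 : Cn n)) ℂ) = ↑(F ∘ g')) := by
  constructor
  · -- construct `g` from representatives of the `φ (coordGerm n a)`
    have hrep : ∀ a : Fin n, ∃ G : Cn n → ℂ, AnalyticAt ℂ G 0 ∧
        (↑G : Germ (𝓝 (0 : Cn n)) ℂ) = ↑(φ (coordGerm n a)) := fun a => (φ (coordGerm n a)).2
    choose G hGa hGe using hrep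
    have hG0 : ∀ a, G a 0 = 0 := by
      intro a
      have hm : ((φ (coordGerm n a) : HoloGerm n) : Germ (𝓝 (0 : Cn n)) ℂ).valueAt = 0 :=
        hφ _ (coordGerm_mem_mIdeal a)
      rw [← hGe a] at hm
      exact hm
    set g : Cn n → Cn n :=
      fun x => (PiLp.continuousLinearEquiv 2 ℂ (fun _ : Fin n => ℂ)).symm (fun a => G a x)
      with hgdef
    have hgcoord : ∀ (x : Cn n) (a : Fin n), g x a = G a x := by
      intro x a
      rfl
    have hg0 : g 0 = 0 := by
      ext a
      rw [hgcoord 0 a, hG0 a]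
      rfl
    have hev : ∀ᶠ x in 𝓝 (0 : Cn n), ∀ a, AnalyticAt ℂ (G a) x :=
      eventually_all.2 fun a => (hGa a).eventually_analyticAt
    obtain ⟨U', hU'sub, hU'open, hU'0⟩ := mem_nhds_iff.1 hev
    have hgA : AnalyticOnNhd ℂ g U' := by
      intro x hx
      have hall : ∀ a, AnalyticAt ℂ (G a) x := hU'sub hx
      have hpi : AnalyticAt ℂ (fun y : Cn n => fun a => G a y) x := AnalyticAt.pi hall
      exact (((PiLp.continuousLinearEquiv 2 ℂ (fun _ : Fin n => ℂ)).symm :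
        (∀ _ : Fin n, ℂ) →L[ℂ] Cn n).analyticAt _).comp hpi
    have hcomp : ∀ a : Fin n,
        (↑(fun x : Cn n => g x a) : Germ (𝓝 (0 : Cn n)) ℂ) = ↑(φ (coordGerm n a)) := by
      intro a
      rw [show (fun x : Cn n => g x a) = G a from funext fun x => hgcoord x a]
      exact hGe a
    exact ⟨U', g, hU'open, hU'0, hgA, hg0, hcomp,
      fun f F hF hFf => main2 φ hφ U' g hU'open hU'0 hgA hg0 hcomp f F hF hFf⟩
  · intro U'' g' hU hU0 hg'A hg'0 hcomp f F hF hFf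
    exact main2 φ hφ U'' g' hU hU0 hg'A hg'0 hcomp f F hF hFf
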